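/- Let ξ be a real irrational number and let α, β be real numbers with 0 < α < 1, β > 1 and μ(ξ) < 1 − (log β)/(log α). Then there exist integer sequences (u_n)_{n≥1} and (v_n)_{n≥1} such that lim_{n→∞} (u_n ξ − v_n)/α^n = 1 and lim_{n→∞} u_n/β^n = 1. -/

import Mathlib

open Filter Topology


lemma aux_dirichlet (ξ : ℝ) {s : ℝ} (hs : 0 < s) (hs1 : s ≤ 1) :
    ∃ q : ℕ, 0 < q ∧ (q : ℝ) ≤ 2 / s ∧ ∃ p : ℤ, |(q : ℝ) * ξ - p| ≤ s := by
  have hn : 0 < ⌈1/s⌉₊ := Nat.ceil_pos.mpr (by positivity)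
  obtain ⟨r, h1, h2⟩ := Real.exists_rat_abs_sub_le_and_den_le ξ hn
  set n := ⌈1/s⌉₊ with hn'
  have hs' : (1:ℝ) ≤ 1/s := by rw [le_div_iff₀ hs]; linarith
  have hns : (1:ℝ)/s ≤ n := Nat.le_ceil _
  have hrd : (0:ℝ) < r.den := by exact_mod_cast r.pos
  refine ⟨r.den, r.pos, ?_, r.num, ?_⟩
  · have : (r.den : ℝ) ≤ n := by exact_mod_cast h2
    have h3 : (n : ℝ) < 1/s + 1 := Nat.ceil_lt_add_one (by positivity)
    have : (r.den : ℝ) < 1/s + 1 := lt_of_le_of_lt this h3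
    have h7 : (2:ℝ)/s = 1/s + 1/s := by ring
    linarith
  · have key : (r.den:ℝ) * ξ - r.num = (r.den:ℝ) * (ξ - r) := by
      rw [Rat.cast_def]; field_simp
    rw [key, abs_mul, abs_of_pos hrd]
    have h4 : (r.den:ℝ) * |ξ - r| ≤ (r.den:ℝ) * (1 / ((n + 1) * r.den)) :=
      mul_le_mul_of_nonneg_left h1 hrd.le
    have h5 : (r.den:ℝ) * (1 / (((n:ℝ) + 1) * r.den)) = 1 / ((n:ℝ) + 1) := by
      field_simp
    have h6 : 1 / ((n:ℝ) + 1) ≤ s := by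
      rw [div_le_iff₀ (by positivity)]
      have : s * (1/s) ≤ s * n := mul_le_mul_of_nonneg_left hns hs.le
      have hss : s * (1/s) = 1 := by field_simp
      nlinarith
    calc (r.den:ℝ) * |ξ - r| ≤ 1 / ((n:ℝ) + 1) := by rw [← h5]; exact_mod_cast h4
      _ ≤ s := h6

lemma aux_two_le (ξ : ℝ) (hξ : Irrational ξ) {μ : ℝ}
    (h : ∀ᶠ q : ℕ in atTop, ∀ p : ℤ, |ξ - (p : ℝ) / (q : ℝ)| > 1 / (q : ℝ) ^ μ) : 2 ≤ μ := by
  by_contra hlt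
  push_neg at hlt
  obtain ⟨N, hNq⟩ := eventually_atTop.mp h
  have hinf := Real.infinite_rat_abs_sub_lt_one_div_den_sq_of_irrational hξ
  set D := max N 1 with hD
  set A : ℤ := ⌈(|ξ| + 1) * D⌉ with hA
  have hfin : {r : ℚ | r.den < D ∧ |ξ - r| < 1 / (r.den:ℝ)^2}.Finite := by
    have hsub : {r : ℚ | r.den < D ∧ |ξ - r| < 1 / (r.den:ℝ)^2} ⊆
        (fun r : ℚ => (r.num, r.den)) ⁻¹' (Set.Icc (-A) A ×ˢ Set.Iic D) := by
      intro r hr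
      obtain ⟨hrD, hrb⟩ := hr
      have hrd1 : (1:ℝ) ≤ (r.den:ℝ) := by exact_mod_cast r.pos
      have hden2 : (1:ℝ) / (r.den:ℝ)^2 ≤ 1 := by
        rw [div_le_one (by positivity)]; nlinarith
      have habs : |(r:ℝ)| ≤ |ξ| + 1 := by
        have := abs_sub_abs_le_abs_sub (r:ℝ) ξ
        rw [abs_sub_comm] at this
        linarith
      have hnum : |(r.num:ℝ)| ≤ (|ξ| + 1) * D := by
        have : (r.num:ℝ) = (r:ℝ) * r.den := by
          rw [Rat.cast_def]; field_simp
        rw [this, abs_mul, abs_of_pos (by exact_mod_cast r.pos : (0:ℝ) < r.den)]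
        have hDpos : (r.den:ℝ) ≤ D := by exact_mod_cast hrD.le
        have : |(r:ℝ)| * (r.den:ℝ) ≤ (|ξ| + 1) * D :=
          mul_le_mul habs hDpos (by positivity) (by positivity)
        exact this
      constructor
      · simp only [Set.mem_Icc]
        have hAc : (|ξ| + 1) * D ≤ (A:ℝ) := Int.le_ceil _
        have : |(r.num:ℝ)| ≤ (A:ℝ) := le_trans hnum hAc
        rw [← Int.cast_abs] at this
        have : |r.num| ≤ A := by exact_mod_cast this
        exact abs_le.mp this
      · exact Set.mem_Iic.mpr hrD.le
    have hprod : (Set.Icc (-A) A ×ˢ Set.Iic D : Set (ℤ × ℕ)).Finite :=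
      (Set.finite_Icc _ _).prod (Set.finite_Iic _)
    have hinj : Function.Injective (fun r : ℚ => (r.num, r.den)) := by
      intro a b hab
      simp only [Prod.mk.injEq] at hab
      exact Rat.ext hab.1 hab.2
    exact Set.Finite.subset (hprod.preimage (hinj.injOn)) hsub
  obtain ⟨r, hrS, hrD⟩ : ∃ r : ℚ, |ξ - r| < 1 / (r.den:ℝ)^2 ∧ D ≤ r.den := by
    by_contra h'
    push_neg at h'
    exact hinf (hfin.subset fun r hr => ⟨h' r hr, hr⟩)
  have hq := hNq r.den (le_trans (le_max_left N 1) hrD) r.num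
  have hden1 : (1:ℝ) ≤ (r.den:ℝ) := by exact_mod_cast r.pos
  have hcast : (r:ℝ) = (r.num:ℝ) / (r.den:ℝ) := by rw [Rat.cast_def]
  have hle : (r.den:ℝ) ^ μ ≤ (r.den:ℝ) ^ (2:ℝ) :=
    Real.rpow_le_rpow_of_exponent_le hden1 hlt.le
  have h2 : (r.den:ℝ) ^ (2:ℝ) = (r.den:ℝ) ^ (2:ℕ) := by
    rw [← Real.rpow_natCast]; norm_num
  have hpos : (0:ℝ) < (r.den:ℝ) ^ μ := Real.rpow_pos_of_pos (by linarith) _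
  have : 1 / (r.den:ℝ)^(2:ℕ) ≤ 1 / (r.den:ℝ)^μ := by
    apply one_div_le_one_div_of_le hpos
    rw [← h2]; exact hle
  rw [← hcast] at hq
  have := hrS.trans_le (le_trans this hq.le)
  exact lt_irrefl _ this

lemma aux_key (ξ μ : ℝ) (N₀ : ℕ) (c₀ : ℝ) (hμ2 : 2 ≤ μ)
    (hN : ∀ q : ℕ, N₀ ≤ q → ∀ p : ℤ, (q : ℝ) ^ ((1:ℝ) - μ) < |(q : ℝ) * ξ - p|)
    (hc₀ : 0 < c₀) (hc₁ : c₀ ≤ 1/2)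
    (hc : ∀ q : ℕ, 0 < q → q < N₀ → ∀ p : ℤ, c₀ ≤ |(q : ℝ) * ξ - p|) :
    ∀ m : ℕ, ∀ y δ : ℝ, 0 < δ → |y| < c₀ → |y| ≤ 2 ^ m * δ →
    ∃ k p : ℤ, |(k : ℝ) * ξ - p - y| ≤ δ ∧
      |(k : ℝ)| ≤ 4 * (2 ^ μ + 2) * δ ^ ((1:ℝ) - μ)
                 - 2 * (2 ^ μ + 2) * (max |y| δ) ^ ((1:ℝ) - μ) := by
  have hE : (0:ℝ) < 2 ^ μ := Real.rpow_pos_of_pos two_pos μ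
  have hE4 : (4:ℝ) ≤ 2 ^ μ := by
    have : (2:ℝ) ^ (2:ℝ) ≤ 2 ^ μ := Real.rpow_le_rpow_of_exponent_le one_le_two hμ2
    have h4 : (2:ℝ) ^ (2:ℝ) = 4 := by
      rw [show (2:ℝ) = ((2:ℕ):ℝ) by norm_num, Real.rpow_natCast]; norm_num
    linarith
  have base : ∀ y δ : ℝ, 0 < δ → |y| ≤ δ →
      ∃ k p : ℤ, |(k : ℝ) * ξ - p - y| ≤ δ ∧
      |(k : ℝ)| ≤ 4 * (2 ^ μ + 2) * δ ^ ((1:ℝ) - μ)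
                 - 2 * (2 ^ μ + 2) * (max |y| δ) ^ ((1:ℝ) - μ) := by
    intro y δ hδ hyδ
    refine ⟨0, 0, by simpa using hyδ, ?_⟩
    rw [max_eq_right hyδ]
    have ht : (0:ℝ) < δ ^ ((1:ℝ) - μ) := Real.rpow_pos_of_pos hδ _
    simp only [Int.cast_zero, abs_zero]
    nlinarith
  intro m
  induction m with
  | zero =>
    intro y δ hδ hyc hym
    exact base y δ hδ (by simpa using hym)
  | succ m ih =>
    intro y δ hδ hyc hym
    by_cases hbase : |y| ≤ δ
    · exact base y δ hδ hbase
    · push_neg at hbase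
      set s := |y| with hsdef
      have hs0 : 0 < s := lt_trans hδ hbase
      have hs1 : s ≤ 1 := by
        have := hyc; linarith
      obtain ⟨qd, hqd0, hqd2, pd, hpd⟩ := aux_dirichlet ξ hs0 hs1
      have hSne : qd ∈ {q : ℕ | 0 < q ∧ ∃ p : ℤ, |(q : ℝ) * ξ - p| ≤ s} := ⟨hqd0, pd, hpd⟩
      set Q := sInf {q : ℕ | 0 < q ∧ ∃ p : ℤ, |(q : ℝ) * ξ - p| ≤ s} with hQdef
      obtain ⟨hQ0, p', hp'⟩ : 0 < Q ∧ ∃ p : ℤ, |(Q : ℝ) * ξ - p| ≤ s :=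
        Nat.sInf_mem ⟨qd, hSne⟩
      have hQle : (Q : ℝ) ≤ 2 / s := by
        have h1 : Q ≤ qd := Nat.sInf_le hSne
        exact le_trans (by exact_mod_cast h1) hqd2
      have hQN : N₀ ≤ Q := by
        by_contra h
        push_neg at h
        have := hc Q hQ0 h p'
        linarith [hp', hyc]
      set θ := (Q : ℝ) * ξ - p' with hθdef
      have hθs : |θ| ≤ s := hp'
      have hθl : ((Q : ℝ)) ^ ((1:ℝ) - μ) < |θ| := hN Q hQN p'
      have hQpos : (0:ℝ) < Q := by exact_mod_cast hQ0
      have hθ0 : 0 < |θ| := lt_trans (Real.rpow_pos_of_pos hQpos _) hθl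
      have hθne : θ ≠ 0 := abs_pos.mp hθ0
      have h2s : (0:ℝ) < 2 / s := by positivity
      -- lower bound on |θ| : (s/2)^(μ-1) < |θ|
      have heq : ((2/s):ℝ) ^ ((1:ℝ) - μ) = (s/2) ^ (μ - (1:ℝ)) := by
        rw [show (s/2 : ℝ) = (2/s)⁻¹ by rw [inv_div],
          Real.inv_rpow h2s.le, ← Real.rpow_neg h2s.le]
        ring_nf
      have hθl2 : (s/2) ^ (μ - (1:ℝ)) < |θ| := by
        rw [← heq]
        exact lt_of_le_of_lt (Real.rpow_le_rpow_of_nonpos hQpos hQle (by linarith)) hθl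
      have hs2pos : (0:ℝ) < s/2 := by positivity
      have hinv : 1 / |θ| ≤ (s/2) ^ ((1:ℝ) - μ) := by
        rw [show (1:ℝ) - μ = -(μ - 1) by ring, Real.rpow_neg hs2pos.le, ← one_div]
        exact one_div_le_one_div_of_le (Real.rpow_pos_of_pos hs2pos _) hθl2.le
      set j := round (y / θ) with hjdef
      have hround := abs_sub_round (y / θ)
      have hjy : |y - j * θ| ≤ |θ| / 2 := by
        calc |y - j * θ| = |θ| * |y / θ - j| := by
              rw [← abs_mul]; congr 1; field_simp
          _ ≤ |θ| * (1/2) := mul_le_mul_of_nonneg_left hround hθ0.le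
          _ = |θ| / 2 := by ring
      set r := y - j * θ with hrdef
      have hr2 : |r| ≤ s / 2 := le_trans hjy (by linarith)
      -- size bound for |j| * Q
      have hj1 : |(j : ℝ)| ≤ |y / θ| + 1/2 := by
        have : |(j:ℝ)| = |y/θ - (y/θ - j)| := by congr 1; ring
        rw [this]
        calc |y/θ - (y/θ - j)| ≤ |y/θ| + |y/θ - j| := by
              have := abs_sub (y/θ) (y/θ - (j:ℝ)); exact abs_sub _ _
          _ ≤ |y/θ| + 1/2 := by linarith
      have hyθ : |y / θ| ≤ s * ((s/2) ^ ((1:ℝ) - μ)) := by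
        rw [abs_div, ← hsdef]
        calc s / |θ| = s * (1 / |θ|) := by ring
          _ ≤ s * ((s/2) ^ ((1:ℝ) - μ)) := mul_le_mul_of_nonneg_left hinv hs0.le
      have hjq : |(j : ℝ)| * (Q:ℝ) ≤ (2 ^ μ + 1) * s ^ ((1:ℝ) - μ) := by
        have h1 : |(j : ℝ)| * (Q:ℝ) ≤ (s * ((s/2) ^ ((1:ℝ) - μ)) + 1/2) * (2/s) := by
          apply mul_le_mul (by linarith) hQle (by positivity)
          positivity
        have h2 : (s * ((s/2) ^ ((1:ℝ) - μ)) + 1/2) * (2/s)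
            = 2 * (s/2) ^ ((1:ℝ) - μ) + 1/s := by
          field_simp
        have h3 : (s/2 : ℝ) ^ ((1:ℝ) - μ) = s ^ ((1:ℝ)-μ) / 2 ^ ((1:ℝ)-μ) :=
          Real.div_rpow hs0.le (by norm_num) _
        have h4 : (2:ℝ) * (s/2) ^ ((1:ℝ) - μ) = 2 ^ μ * s ^ ((1:ℝ)-μ) := by
          rw [h3, show (2:ℝ) ^ ((1:ℝ)-μ) = 2 / 2 ^ μ by
            rw [Real.rpow_sub two_pos, Real.rpow_one]]
          field_simp
        have h5 : 1/s ≤ s ^ ((1:ℝ) - μ) := by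
          rw [show (1:ℝ)/s = s ^ (-(1:ℝ)) by rw [Real.rpow_neg_one, one_div]]
          exact Real.rpow_le_rpow_of_exponent_ge hs0 hs1 (by linarith)
        calc |(j : ℝ)| * (Q:ℝ) ≤ 2 * (s/2) ^ ((1:ℝ) - μ) + 1/s := by rw [← h2]; exact h1
          _ ≤ 2 ^ μ * s ^ ((1:ℝ)-μ) + s ^ ((1:ℝ)-μ) := by rw [← h4]; linarith
          _ = (2 ^ μ + 1) * s ^ ((1:ℝ) - μ) := by ring
      have hts : (0:ℝ) < s ^ ((1:ℝ) - μ) := Real.rpow_pos_of_pos hs0 _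
      have htδ : (0:ℝ) < δ ^ ((1:ℝ) - μ) := Real.rpow_pos_of_pos hδ _
      have htsδ : s ^ ((1:ℝ) - μ) ≤ δ ^ ((1:ℝ) - μ) :=
        Real.rpow_le_rpow_of_nonpos hδ hbase.le (by linarith)
      have hmax : max |y| δ = s := max_eq_left hbase.le
      by_cases hrδ : |r| ≤ δ
      · -- single step suffices
        refine ⟨j * (Q:ℤ), j * p', ?_, ?_⟩
        · have hid : ((j * (Q:ℤ) : ℤ) : ℝ) * ξ - ((j * p' : ℤ) : ℝ) - y = -r := by
            rw [hrdef, hθdef]; push_cast; ring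
          rw [hid, abs_neg]; exact hrδ
        · have hid2 : |((j * (Q:ℤ) : ℤ) : ℝ)| = |(j:ℝ)| * (Q:ℝ) := by
            push_cast
            rw [abs_mul, abs_of_pos hQpos]
          rw [hid2, hmax]
          have p1 : 4 * (2^μ+2) * s^((1:ℝ)-μ) ≤ 4 * (2^μ+2) * δ^((1:ℝ)-μ) :=
            mul_le_mul_of_nonneg_left htsδ (by positivity)
          have p2 : (2^μ+1) * s^((1:ℝ)-μ) ≤ (2*2^μ+4) * s^((1:ℝ)-μ) :=
            mul_le_mul_of_nonneg_right (by linarith) hts.le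
          linarith [hjq, p1, p2]
      · push_neg at hrδ
        have hrc : |r| < c₀ := by
          have : s < c₀ := hyc
          linarith [hr2]
        have hrm : |r| ≤ 2 ^ m * δ := by
          have h1 : s ≤ 2 ^ (m+1) * δ := hym
          rw [pow_succ] at h1
          linarith [hr2]
        obtain ⟨k₁, p₁, he1, hb1⟩ := ih r δ hδ hrc hrm
        refine ⟨j * (Q:ℤ) + k₁, j * p' + p₁, ?_, ?_⟩
        · have hid : ((j * (Q:ℤ) + k₁ : ℤ) : ℝ) * ξ - ((j * p' + p₁ : ℤ) : ℝ) - y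
              = (k₁ : ℝ) * ξ - p₁ - r := by
            rw [hrdef, hθdef]; push_cast; ring
          rw [hid]; exact he1
        · have htri : |((j * (Q:ℤ) + k₁ : ℤ) : ℝ)| ≤ |(j:ℝ)| * (Q:ℝ) + |(k₁:ℝ)| := by
            push_cast
            calc |(j:ℝ) * (Q:ℝ) + (k₁:ℝ)| ≤ |(j:ℝ) * (Q:ℝ)| + |(k₁:ℝ)| := abs_add_le _ _
              _ = |(j:ℝ)| * (Q:ℝ) + |(k₁:ℝ)| := by
                  rw [abs_mul, abs_of_pos hQpos]
          have hmaxr : max |r| δ = |r| := max_eq_left hrδ.le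
          rw [hmaxr] at hb1
          have hr0 : (0:ℝ) < |r| := lt_trans hδ hrδ
          have htr : (s/2) ^ ((1:ℝ) - μ) ≤ |r| ^ ((1:ℝ) - μ) :=
            Real.rpow_le_rpow_of_nonpos hr0 hr2 (by linarith)
          -- 2 * (s/2)^(1-μ) = 2^μ * s^(1-μ)  (reuse)
          have h3 : (s/2 : ℝ) ^ ((1:ℝ) - μ) = s ^ ((1:ℝ)-μ) / 2 ^ ((1:ℝ)-μ) :=
            Real.div_rpow hs0.le (by norm_num) _
          have h4 : (2:ℝ) * (s/2) ^ ((1:ℝ) - μ) = 2 ^ μ * s ^ ((1:ℝ)-μ) := by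
            rw [h3, show (2:ℝ) ^ ((1:ℝ)-μ) = 2 / 2 ^ μ by
              rw [Real.rpow_sub two_pos, Real.rpow_one]]
            field_simp
          have hEr : 2 ^ μ * s ^ ((1:ℝ)-μ) ≤ 2 * |r| ^ ((1:ℝ) - μ) := by
            rw [← h4]; linarith
          have htr2 : 2 * s ^ ((1:ℝ)-μ) ≤ |r| ^ ((1:ℝ) - μ) := by
            have h6 := mul_le_mul_of_nonneg_right hE4 hts.le
            linarith [hEr, h6]
          rw [hmax]
          calc |((j * (Q:ℤ) + k₁ : ℤ) : ℝ)| ≤ |(j:ℝ)| * (Q:ℝ) + |(k₁:ℝ)| := htri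
            _ ≤ (2 ^ μ + 1) * s ^ ((1:ℝ) - μ)
                + (4 * (2 ^ μ + 2) * δ ^ ((1:ℝ) - μ)
                   - 2 * (2 ^ μ + 2) * |r| ^ ((1:ℝ)-μ)) := by linarith
            _ ≤ 4 * (2 ^ μ + 2) * δ ^ ((1:ℝ) - μ)
                - 2 * (2 ^ μ + 2) * s ^ ((1:ℝ) - μ) := by
                have p3 : 2*(2^μ+2)*(2*s^((1:ℝ)-μ)) ≤ 2*(2^μ+2)*(|r|^((1:ℝ)-μ)) :=
                  mul_le_mul_of_nonneg_left htr2 (by positivity)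
                have p4 : (0:ℝ) ≤ 2^μ * s^((1:ℝ)-μ) := mul_nonneg hE.le hts.le
                linarith [p3, p4]

lemma aux_cover (ξ μ : ℝ) (N₀ : ℕ) (c₀ : ℝ) (hμ2 : 2 ≤ μ)
    (hN : ∀ q : ℕ, N₀ ≤ q → ∀ p : ℤ, (q : ℝ) ^ ((1:ℝ) - μ) < |(q : ℝ) * ξ - p|)
    (hc₀ : 0 < c₀) (hc₁ : c₀ ≤ 1/2)
    (hc : ∀ q : ℕ, 0 < q → q < N₀ → ∀ p : ℤ, c₀ ≤ |(q : ℝ) * ξ - p|)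
    (y δ : ℝ) (hδ : 0 < δ) (hy : |y| < c₀) :
    ∃ k p : ℤ, |(k : ℝ) * ξ - p - y| ≤ δ ∧
      |(k : ℝ)| ≤ 4 * (2 ^ μ + 2) * δ ^ ((1:ℝ) - μ) := by
  obtain ⟨m, hm⟩ := pow_unbounded_of_one_lt (|y| / δ) (one_lt_two (α := ℝ))
  have hym : |y| ≤ 2 ^ m * δ := by
    rw [div_lt_iff₀ hδ] at hm
    linarith
  obtain ⟨k, p, h1, h2⟩ := aux_key ξ μ N₀ c₀ hμ2 hN hc₀ hc₁ hc m y δ hδ hy hym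
  refine ⟨k, p, h1, le_trans h2 ?_⟩
  have : (0:ℝ) < (max |y| δ) ^ ((1:ℝ) - μ) :=
    Real.rpow_pos_of_pos (lt_max_of_lt_right hδ) _
  have hE : (0:ℝ) < 2 ^ μ := Real.rpow_pos_of_pos two_pos μ
  nlinarith

/-- The irrationality exponent of a real number, as an extended real:
the infimum of all real `μ` such that `|ξ - p/q| > 1/q^μ` for all integers `p, q`
with `q` sufficiently large (`⊤` if no such real `μ` exists). -/
noncomputable def irrationalityExponent (ξ : ℝ) : EReal :=
  sInf {x : EReal | ∃ μ : ℝ, x = (μ : EReal) ∧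
    ∀ᶠ q : ℕ in atTop, ∀ p : ℤ, |ξ - (p : ℝ) / (q : ℝ)| > 1 / (q : ℝ) ^ μ}

set_option maxHeartbeats 2000000 in
theorem exists_sequences_geometric (ξ : ℝ) (hξ : Irrational ξ)
    (α β : ℝ) (hα0 : 0 < α) (hα1 : α < 1) (hβ : 1 < β)
    (hμ : irrationalityExponent ξ < ((1 - Real.log β / Real.log α : ℝ) : EReal)) :
    ∃ u v : ℕ → ℤ,
      Tendsto (fun n => ((u n : ℝ) * ξ - (v n : ℝ)) / α ^ n) atTop (𝓝 1) ∧
      Tendsto (fun n => (u n : ℝ) / β ^ n) atTop (𝓝 1) := by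
  -- extract a valid exponent μ
  obtain ⟨x, hxS, hxM⟩ := sInf_lt_iff.mp hμ
  obtain ⟨μ, rfl, hev⟩ := hxS
  rw [EReal.coe_lt_coe_iff] at hxM
  have hμ2 : 2 ≤ μ := aux_two_le ξ hξ hev
  obtain ⟨N₁, hN₁⟩ := eventually_atTop.mp hev
  set N₀ := max N₁ 1 with hN₀def
  have hN : ∀ q : ℕ, N₀ ≤ q → ∀ p : ℤ, (q : ℝ) ^ ((1:ℝ) - μ) < |(q : ℝ) * ξ - p| := by
    intro q hq p
    have hq1 : 1 ≤ q := le_trans (le_max_right _ _) hq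
    have hqR : (0:ℝ) < q := by exact_mod_cast hq1
    have h := hN₁ q (le_trans (le_max_left _ _) hq) p
    have habs : |(q:ℝ) * ξ - p| = q * |ξ - p / q| := by
      rw [← abs_of_pos hqR, ← abs_mul]
      congr 1
      field_simp
      simp only [abs_of_pos hqR]; ring
    rw [habs]
    calc (q:ℝ) ^ ((1:ℝ) - μ) = q * (1 / (q:ℝ) ^ μ) := by
          rw [Real.rpow_sub hqR, Real.rpow_one]; ring
      _ < q * |ξ - p / q| := by
          apply mul_lt_mul_of_pos_left h hqR
  -- the constant c₀
  set f : ℕ → ℝ := fun q => |(q:ℝ) * ξ - round ((q:ℝ) * ξ)| with hfdef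
  set T : Finset ℝ := insert (1/2) ((Finset.Ico 1 N₀).image f) with hTdef
  have hTne : T.Nonempty := ⟨1/2, Finset.mem_insert_self _ _⟩
  set c₀ := T.min' hTne with hc₀def
  have hc₀mem : c₀ ∈ T := T.min'_mem hTne
  have hc₀pos : 0 < c₀ := by
    rcases Finset.mem_insert.mp hc₀mem with h | h
    · rw [h]; norm_num
    · obtain ⟨q, hq, hfq⟩ := Finset.mem_image.mp h
      have hq1 : 1 ≤ q := (Finset.mem_Ico.mp hq).1
      have hirr : Irrational ((q:ℝ) * ξ) := hξ.natCast_mul (by omega)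
      rw [← hfq]
      exact abs_pos.mpr (sub_ne_zero.mpr (hirr.ne_int _))
  have hc₀half : c₀ ≤ 1/2 := Finset.min'_le _ _ (Finset.mem_insert_self _ _)
  have hc : ∀ q : ℕ, 0 < q → q < N₀ → ∀ p : ℤ, c₀ ≤ |(q:ℝ) * ξ - p| := by
    intro q hq0 hqN p
    have h1 : c₀ ≤ f q :=
      Finset.min'_le _ _ (Finset.mem_insert_of_mem
        (Finset.mem_image_of_mem f (Finset.mem_Ico.mpr ⟨hq0, hqN⟩)))
    by_cases hp : p = round ((q:ℝ) * ξ)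
    · rw [hp]; exact h1
    · have hne : (1:ℝ) ≤ |(p:ℝ) - round ((q:ℝ) * ξ)| := by
        have h2 : p - round ((q:ℝ)*ξ) ≠ 0 := sub_ne_zero.mpr hp
        have h3 := Int.one_le_abs h2
        calc (1:ℝ) ≤ ((|p - round ((q:ℝ)*ξ)| : ℤ) : ℝ) := by exact_mod_cast h3
          _ = |(p:ℝ) - round ((q:ℝ)*ξ)| := by push_cast; ring
      have h2 := abs_sub_round ((q:ℝ) * ξ)
      have h3 : |(p:ℝ) - round ((q:ℝ)*ξ)| ≤ |(q:ℝ)*ξ - p| + |(q:ℝ)*ξ - round ((q:ℝ)*ξ)| := by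
        calc |(p:ℝ) - round ((q:ℝ)*ξ)| ≤ |(p:ℝ) - (q:ℝ)*ξ| + |(q:ℝ)*ξ - round ((q:ℝ)*ξ)| :=
              abs_sub_le _ _ _
          _ = |(q:ℝ)*ξ - p| + |(q:ℝ)*ξ - round ((q:ℝ)*ξ)| := by rw [abs_sub_comm]
      linarith
  -- coarse first step
  obtain ⟨q₀, hq₀0, hq₀b, p₀, hp₀⟩ :=
    aux_dirichlet ξ (show (0:ℝ) < c₀/2 by linarith) (by linarith)
  set θ₀ := (q₀:ℝ) * ξ - p₀ with hθ₀def
  have hθ₀ne : θ₀ ≠ 0 := by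
    have hirr : Irrational ((q₀:ℝ) * ξ) := hξ.natCast_mul (by omega)
    exact sub_ne_zero.mpr (hirr.ne_int _)
  have hθ₀pos : 0 < |θ₀| := abs_pos.mpr hθ₀ne
  have hθ₀le : |θ₀| ≤ c₀/2 := hp₀
  -- the data for each n
  set a : ℕ → ℤ := fun n => ⌈β^n⌉ with hadef
  set w : ℕ → ℤ := fun n => ⌊((a n : ℝ)) * ξ⌋ with hwdef
  set y : ℕ → ℝ := fun n => α^n - (((a n : ℝ)) * ξ - w n) with hydef
  set j : ℕ → ℤ := fun n => round (y n / θ₀) with hjdef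
  set Y : ℕ → ℝ := fun n => y n - (j n) * θ₀ with hYdef
  set δ : ℕ → ℝ := fun n => α^n / (n+1) with hδdef
  have hδpos : ∀ n, 0 < δ n := fun n => by
    simp only [hδdef]; positivity
  have hy1 : ∀ n, |y n| ≤ 1 := by
    intro n
    have h1 : ((a n : ℝ)) * ξ - w n = Int.fract ((a n : ℝ) * ξ) := by
      simp only [hwdef, Int.fract]
    have h2 : 0 ≤ Int.fract ((a n : ℝ) * ξ) := Int.fract_nonneg _
    have h3 : Int.fract ((a n : ℝ) * ξ) < 1 := Int.fract_lt_one _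
    have h4 : 0 < α^n := by positivity
    have h5 : α^n ≤ 1 := pow_le_one₀ hα0.le hα1.le
    simp only [hydef, h1]
    rw [abs_le]
    constructor <;> linarith
  have hjb : ∀ n, |(j n : ℝ)| ≤ 1/|θ₀| + 1/2 := by
    intro n
    have hr := abs_sub_round (y n / θ₀)
    have h1 : |(j n : ℝ)| ≤ |y n / θ₀| + 1/2 := by
      have h0 : |(j n:ℝ)| = |y n/θ₀ - (y n/θ₀ - j n)| := by congr 1; ring
      rw [h0]
      calc |y n/θ₀ - (y n/θ₀ - j n)| ≤ |y n/θ₀| + |y n/θ₀ - j n| := abs_sub _ _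
        _ ≤ |y n/θ₀| + 1/2 := by
            simp only [hjdef]
            linarith [hr]
    have h2 : |y n / θ₀| ≤ 1/|θ₀| := by
      rw [abs_div]
      exact div_le_div_of_nonneg_right (hy1 n) hθ₀pos.le
    linarith
  have hYc : ∀ n, |Y n| < c₀ := by
    intro n
    have hr := abs_sub_round (y n / θ₀)
    have h1 : |Y n| ≤ |θ₀|/2 := by
      simp only [hYdef, hjdef]
      calc |y n - round (y n / θ₀) * θ₀| = |θ₀| * |y n / θ₀ - round (y n / θ₀)| := by
            rw [← abs_mul]; congr 1; field_simp
        _ ≤ |θ₀| * (1/2) := mul_le_mul_of_nonneg_left hr hθ₀pos.le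
        _ = |θ₀|/2 := by ring
    linarith
  -- choose the fine corrections
  have hE : ∀ n : ℕ, ∃ kp : ℤ × ℤ, |(kp.1 : ℝ) * ξ - kp.2 - Y n| ≤ δ n ∧
      |(kp.1 : ℝ)| ≤ 4 * (2 ^ μ + 2) * (δ n) ^ ((1:ℝ) - μ) := by
    intro n
    obtain ⟨k, p, h1, h2⟩ := aux_cover ξ μ N₀ c₀ hμ2 hN hc₀pos hc₀half hc
      (Y n) (δ n) (hδpos n) (hYc n)
    exact ⟨(k, p), h1, h2⟩
  set F : ℕ → ℤ × ℤ := fun n => (hE n).choose with hFdef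
  have hF : ∀ n, |((F n).1 : ℝ) * ξ - (F n).2 - Y n| ≤ δ n ∧
      |((F n).1 : ℝ)| ≤ 4 * (2 ^ μ + 2) * (δ n) ^ ((1:ℝ) - μ) := fun n => (hE n).choose_spec
  refine ⟨fun n => a n + j n * q₀ + (F n).1, fun n => w n + j n * p₀ + (F n).2, ?_, ?_⟩
  · -- first limit
    rw [← tendsto_sub_nhds_zero_iff]
    refine squeeze_zero_norm (fun n => ?_) tendsto_one_div_add_atTop_nhds_zero_nat
    have hαn : (0:ℝ) < α^n := by positivity
    have hid : ((a n + j n * q₀ + (F n).1 : ℤ) : ℝ) * ξ - ((w n + j n * p₀ + (F n).2 : ℤ) : ℝ)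
        - α^n = ((F n).1 : ℝ) * ξ - (F n).2 - Y n := by
      simp only [hYdef, hydef, hθ₀def]
      push_cast
      ring
    have e1 : (((a n + j n * q₀ + (F n).1 : ℤ) : ℝ) * ξ
        - ((w n + j n * p₀ + (F n).2 : ℤ) : ℝ)) / α^n - 1
        = (((a n + j n * q₀ + (F n).1 : ℤ) : ℝ) * ξ
           - ((w n + j n * p₀ + (F n).2 : ℤ) : ℝ) - α^n) / α^n := by
      field_simp
    show ‖(((a n + j n * q₀ + (F n).1 : ℤ) : ℝ) * ξ
        - ((w n + j n * p₀ + (F n).2 : ℤ) : ℝ)) / α^n - 1‖ ≤ 1 / ((n:ℝ)+1)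
    rw [Real.norm_eq_abs, e1, hid, abs_div, abs_of_pos hαn]
    calc |((F n).1 : ℝ) * ξ - (F n).2 - Y n| / α^n ≤ δ n / α^n := by
          gcongr
          exact (hF n).1
      _ = 1 / ((n:ℝ)+1) := by
          simp only [hδdef]
          rw [div_div, mul_comm, div_mul_eq_div_div, div_self hαn.ne']
  · -- second limit
    rw [← tendsto_sub_nhds_zero_iff]
    have hlogα : Real.log α < 0 := Real.log_neg hα0 hα1
    have hAB : α ^ ((1:ℝ)-μ) < β := by
      have hlogne : Real.log α ≠ 0 := ne_of_lt hlogα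
      have h' : (μ - 1) * (-Real.log α) < (-(Real.log β / Real.log α)) * (-Real.log α) := by
        apply mul_lt_mul_of_pos_right ?_ (by linarith)
        linarith
      have hrw : (-(Real.log β / Real.log α)) * (-Real.log α) = Real.log β := by
        field_simp
      rw [hrw] at h'
      have h1 : Real.log (α ^ ((1:ℝ)-μ)) < Real.log β := by
        rw [Real.log_rpow hα0]
        have h2 : (1-μ) * Real.log α = (μ-1) * (-Real.log α) := by ring
        linarith
      exact (Real.log_lt_log_iff (Real.rpow_pos_of_pos hα0 _) (by linarith)).mp h1
    set ρ := α ^ ((1:ℝ)-μ) / β with hρdef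
    have hρ0 : 0 < ρ := div_pos (Real.rpow_pos_of_pos hα0 _) (by linarith)
    have hρ1 : ρ < 1 := (div_lt_one (by linarith)).mpr hAB
    set M : ℕ := ⌈μ⌉₊ with hMdef
    set C₁ : ℝ := (1/|θ₀| + 1/2) * q₀ with hC₁def
    set Kc : ℝ := 4 * (2 ^ μ + 2) with hKcdef
    have hKc0 : 0 < Kc := by
      have h2 : (0:ℝ) < 2 ^ μ := Real.rpow_pos_of_pos two_pos μ
      simp only [hKcdef]; nlinarith
    have hδb : ∀ n : ℕ, (δ n) ^ ((1:ℝ)-μ) / β^n ≤ ((n:ℝ)+1)^M * ρ^n := by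
      intro n
      have hn1 : (0:ℝ) < (n:ℝ)+1 := by positivity
      have hβn : (0:ℝ) < β^n := by positivity
      have h1 : (δ n) ^ ((1:ℝ)-μ) = (α^n) ^ ((1:ℝ)-μ) / ((n:ℝ)+1) ^ ((1:ℝ)-μ) := by
        simp only [hδdef]; exact Real.div_rpow (by positivity) hn1.le _
      have h2 : ((n:ℝ)+1) ^ ((1:ℝ)-μ) = (((n:ℝ)+1) ^ (μ-1))⁻¹ := by
        rw [show (1:ℝ)-μ = -(μ-1) by ring, Real.rpow_neg hn1.le]
      have h3 : (α^n : ℝ) ^ ((1:ℝ)-μ) = (α ^ ((1:ℝ)-μ))^n := by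
        rw [← Real.rpow_natCast α n, ← Real.rpow_mul hα0.le, mul_comm,
          Real.rpow_mul hα0.le, Real.rpow_natCast]
      have hpow : (0:ℝ) < ((n:ℝ)+1) ^ (μ-1) := Real.rpow_pos_of_pos hn1 _
      have h4 : (δ n) ^ ((1:ℝ)-μ) / β^n = ((n:ℝ)+1)^(μ-1) * ρ^n := by
        rw [h1, h2, h3, hρdef, div_pow]
        field_simp
      rw [h4]
      have h5 : ((n:ℝ)+1)^(μ-1) ≤ ((n:ℝ)+1)^((M:ℕ):ℝ) :=
        Real.rpow_le_rpow_of_exponent_le (by linarith) (by linarith [Nat.le_ceil μ])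
      rw [Real.rpow_natCast] at h5
      exact mul_le_mul_of_nonneg_right h5 (pow_nonneg hρ0.le n)
    refine squeeze_zero_norm
      (a := fun n : ℕ => (1+C₁)*(1/β)^n + Kc*(((n:ℝ)+1)^M * ρ^n)) (fun n => ?_) ?_
    · have hβn : (0:ℝ) < β^n := by positivity
      have e1 : ((a n + j n * q₀ + (F n).1 : ℤ) : ℝ)/β^n - 1
          = (((a n + j n * q₀ + (F n).1 : ℤ) : ℝ) - β^n)/β^n := by field_simp
      have hceil : |((a n : ℤ):ℝ) - β^n| ≤ 1 := by
        simp only [hadef]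
        have h1 := Int.le_ceil (β^n)
        have h2 := Int.ceil_lt_add_one (β^n)
        rw [abs_le]; constructor <;> linarith
      have t1 : |(j n:ℝ)*(q₀:ℝ)| ≤ C₁ := by
        rw [abs_mul, abs_of_nonneg (by positivity : (0:ℝ) ≤ (q₀:ℝ))]
        simp only [hC₁def]
        exact mul_le_mul_of_nonneg_right (hjb n) (by positivity)
      have hnum : |((a n + j n * q₀ + (F n).1 : ℤ) : ℝ) - β^n|
          ≤ 1 + C₁ + Kc * (δ n) ^ ((1:ℝ)-μ) := by
        have expand : ((a n + j n * q₀ + (F n).1 : ℤ) : ℝ) - β^n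
            = (((a n : ℤ):ℝ) - β^n) + ((j n:ℝ)*(q₀:ℝ) + ((F n).1:ℝ)) := by push_cast; ring
        rw [expand]
        have h6 := (hF n).2
        calc |(((a n : ℤ):ℝ) - β^n) + ((j n:ℝ)*(q₀:ℝ) + ((F n).1:ℝ))|
            ≤ |((a n : ℤ):ℝ) - β^n| + |(j n:ℝ)*(q₀:ℝ) + ((F n).1:ℝ)| := abs_add_le _ _
          _ ≤ |((a n : ℤ):ℝ) - β^n| + (|(j n:ℝ)*(q₀:ℝ)| + |((F n).1:ℝ)|) := by
              linarith [abs_add_le ((j n:ℝ)*(q₀:ℝ)) ((F n).1:ℝ)]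
          _ ≤ 1 + C₁ + Kc * (δ n) ^ ((1:ℝ)-μ) := by
              simp only [hKcdef] at h6 ⊢
              linarith
      show ‖((a n + j n * q₀ + (F n).1 : ℤ) : ℝ)/β^n - 1‖
          ≤ (1+C₁)*(1/β)^n + Kc*(((n:ℝ)+1)^M * ρ^n)
      rw [Real.norm_eq_abs, e1, abs_div, abs_of_pos hβn]
      calc |((a n + j n * q₀ + (F n).1 : ℤ) : ℝ) - β^n| / β^n
          ≤ (1 + C₁ + Kc * (δ n) ^ ((1:ℝ)-μ)) / β^n := by gcongr
        _ = (1+C₁)*(1/β)^n + Kc * ((δ n) ^ ((1:ℝ)-μ) / β^n) := by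
            rw [add_div, mul_div_assoc, one_div_pow, mul_one_div]
        _ ≤ (1+C₁)*(1/β)^n + Kc*(((n:ℝ)+1)^M * ρ^n) := by
            have := mul_le_mul_of_nonneg_left (hδb n) hKc0.le
            linarith
    · have hβinv : (0:ℝ) < 1/β := by positivity
      have hβinv1 : 1/β < 1 := by rw [div_lt_one (by linarith)]; exact hβ
      have t1 : Tendsto (fun n : ℕ => (1+C₁)*(1/β)^n) atTop (𝓝 0) := by
        have h := (tendsto_pow_atTop_nhds_zero_of_lt_one hβinv.le hβinv1).const_mul (1+C₁)
        simpa using h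
      have hsum : Summable (fun n : ℕ => ((n:ℝ))^M * ρ^n) :=
        summable_pow_mul_geometric_of_norm_lt_one M
          (by rw [Real.norm_eq_abs, abs_of_pos hρ0]; exact hρ1)
      have t2' : Tendsto (fun n : ℕ => ((n:ℝ))^M * ρ^n) atTop (𝓝 0) :=
        hsum.tendsto_atTop_zero
      have t2'' := t2'.comp (tendsto_add_atTop_nat 1)
      have t2 : Tendsto (fun n : ℕ => Kc*(((n:ℝ)+1)^M * ρ^n)) atTop (𝓝 0) := by
        have h := t2''.const_mul (Kc * ρ⁻¹)
        rw [mul_zero] at h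
        apply h.congr
        intro n
        simp only [Function.comp]
        push_cast
        rw [pow_succ]
        field_simp
      simpa using t1.add t2
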